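/- Let E = EuclideanSpace ℝ (Fin n) with standard orthonormal basis (b i), let T : E → (E →L[ℝ] E) be a differentiable field of continuous linear operators and φ : E → ℝ a differentiable function. Then for every point x and every vector v, ∑ i ⟪(fderiv ℝ (fun y => φ y • T y) x (b i)) v, b i⟫ = φ(x) · ∑ i ⟪(fderiv ℝ T x (b i)) v, b i⟫ + ⟪T x v, gradient φ x⟫. That is, div(φT) = φ·div T + T(∇φ, ·). -/

import Mathlib

open RealInnerProductSpace

theorem div_smul_tensor (n : ℕ)
    (T : EuclideanSpace ℝ (Fin n) → (EuclideanSpace ℝ (Fin n) →L[ℝ] EuclideanSpace ℝ (Fin n)))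
    (hT : Differentiable ℝ T)
    (φ : EuclideanSpace ℝ (Fin n) → ℝ) (hφ : Differentiable ℝ φ)
    (b : Fin n → EuclideanSpace ℝ (Fin n))
    (hb : b = fun i => EuclideanSpace.basisFun (Fin n) ℝ i)
    (x v : EuclideanSpace ℝ (Fin n)) :
    ∑ i, ⟪(fderiv ℝ (fun y => φ y • T y) x (b i)) v, b i⟫
      = φ x * ∑ i, ⟪(fderiv ℝ T x (b i)) v, b i⟫ + ⟪T x v, gradient φ x⟫ := by
  have hgrad : ∀ u : EuclideanSpace ℝ (Fin n), ⟪gradient φ x, u⟫ = fderiv ℝ φ x u := by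
    intro u
    rw [gradient, InnerProductSpace.toDual_symm_apply]
  have hd : ∀ w : EuclideanSpace ℝ (Fin n),
      (fderiv ℝ (fun y => φ y • T y) x w) v
        = φ x • (fderiv ℝ T x w) v + fderiv ℝ φ x w • T x v := by
    intro w
    rw [fderiv_fun_smul (hφ x) (hT x)]
    simp
  have hsum : ∑ i, ⟪(fderiv ℝ (fun y => φ y • T y) x (b i)) v, b i⟫
      = ∑ i, (φ x * ⟪(fderiv ℝ T x (b i)) v, b i⟫
          + fderiv ℝ φ x (b i) * ⟪T x v, b i⟫) := by
    refine Finset.sum_congr rfl fun i _ => ?_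
    rw [hd, inner_add_left, real_inner_smul_left, real_inner_smul_left]
  rw [hsum, Finset.sum_add_distrib, ← Finset.mul_sum]
  congr 1
  have hTv : T x v = ∑ i, ⟪T x v, b i⟫ • b i := by
    subst hb
    conv_lhs => rw [← (EuclideanSpace.basisFun (Fin n) ℝ).sum_repr (T x v)]
    refine Finset.sum_congr rfl fun i _ => ?_
    rw [OrthonormalBasis.repr_apply_apply, real_inner_comm]
  rw [real_inner_comm, hgrad]
  conv_rhs => rw [hTv]
  rw [map_sum]
  refine Finset.sum_congr rfl fun i _ => ?_
  rw [map_smul]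
  simp [mul_comm]
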